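/- arXiv:2209.02650 — 4 statements merged into one kernel-verified Lean document; each statement's English description precedes it below -/
import Mathlib

section
/- Let v be an assignment of the encoding variables that satisfies Φ_DFA and Φ_P, and let A' be the DFA decoded from v. Then for every prefix u ∈ Pref(P) and every state q ∈ [n], if the run of A' on u ends in state q, then v(x_{u,q}) = 1. -/
/-- **Claim 1.** Let `v` be an assignment (given by the Boolean
functions `d`, `f`, `x`) satisfying `Φ_DFA` and `Φ_P`, and let `A'` be the DFA
decoded from `v` (state set `[n]` is modeled by `Fin n`, with initial state `1`
modeled by `⟨0, _⟩`). Then for every prefix `u ∈ Pref(P)` and every state `q`,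
if the run of `A'` on `u` ends in state `q`, then `v(x_{u,q}) = 1`. -/
theorem claim_positives
    {α : Type} [Fintype α] [Nonempty α]
    (n : ℕ) (hn : 1 ≤ n) (P : Set (List α)) (hP : P.Finite)
    (d : Fin n → α → Fin n → Bool) (f : Fin n → Bool)
    (x : List α → Fin n → Bool)
    -- `v` satisfies `Φ_DFA`:
    (hPhiDFA : ∀ p a, ∃! q, d p a q = true)
    -- `v` satisfies `Φ_P`:
    (hinit : x [] ⟨0, hn⟩ = true ∧ ∀ q, q ≠ ⟨0, hn⟩ → x [] q = false)
    (htrans : ∀ (u : List α) (a : α), (∃ w ∈ P, (u ++ [a]) <+: w) →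
      ∀ p q, x u p = true → d p a q = true → x (u ++ [a]) q = true)
    (hfinal : ∀ w ∈ P, ∀ q, x w q = true → f q = true)
    -- `A'` is the DFA decoded from `v`:
    (A' : DFA α (Fin n))
    (hstart : A'.start = ⟨0, hn⟩)
    (hstep : ∀ p a q, d p a q = true ↔ A'.step p a = q)
    (haccept : A'.accept = {q | f q = true}) :
    ∀ u : List α, (∃ w ∈ P, u <+: w) →
      ∀ q, A'.eval u = q → x u q = true := by
  intro u
  induction u using List.reverseRecOn with
  | nil =>
    intro _ q hq
    simp [DFA.eval, DFA.evalFrom, hstart] at hq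
    subst hq; exact hinit.1
  | append_singleton u a ih =>
    intro hpre q hq
    have hpre' : ∃ w ∈ P, u <+: w := by
      obtain ⟨w, hw, hp⟩ := hpre
      exact ⟨w, hw, (u.prefix_append [a]).trans hp⟩
    have hx : x u (A'.eval u) = true := ih hpre' _ rfl
    have hd : d (A'.eval u) a q = true := (hstep _ _ _).mpr (by
      simpa [DFA.eval, DFA.evalFrom, List.foldl_append] using hq)
    exact htrans u a hpre _ _ hx hd
end

section
/- Let A = ([n], Σ, δ, 1, F) be a DFA with state set [n] and initial state 1, and let v be an assignment of the encoding variables that satisfies Φ_DFA and Φ_{⊆A}, with A' the DFA decoded from v. Then for every word w ∈ Σ*, if the run of A on w ends in state q and the run of A' on w ends in state q', then v(y_{q,q'}) = 1. -/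
/-- **Claim 2.** Let `A = ([n], Σ, δ, 1, F)` be a DFA (state set
`[n]` is modeled by `Fin n`, initial state `1` by `⟨0, _⟩`), and let `v` (given
by the Boolean functions `d`, `f`, `y`) satisfy `Φ_DFA` and `Φ_{⊆A}`, with `A'`
the DFA decoded from `v`. Then for every word `w ∈ Σ*`, if the run of `A` on
`w` ends in state `q` and the run of `A'` on `w` ends in state `q'`, then
`v(y_{q,q'}) = 1`. -/
theorem claim_inclusion
    {α : Type} [Fintype α] [Nonempty α]
    (n : ℕ) (hn : 1 ≤ n)
    (A : DFA α (Fin n)) (hAstart : A.start = ⟨0, hn⟩)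
    (d : Fin n → α → Fin n → Bool) (f : Fin n → Bool)
    (y : Fin n → Fin n → Bool)
    -- `v` satisfies `Φ_DFA`:
    (hPhiDFA : ∀ p a, ∃! q, d p a q = true)
    -- `v` satisfies `Φ_{⊆A}`:
    (hyinit : y ⟨0, hn⟩ ⟨0, hn⟩ = true)
    (hytrans : ∀ (p p' q' : Fin n) (a : α),
      y p p' = true → d p' a q' = true → y (A.step p a) q' = true)
    (hyfinal : ∀ p, p ∉ A.accept → ∀ p', y p p' = true → f p' = false)
    -- `A'` is the DFA decoded from `v`:
    (A' : DFA α (Fin n))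
    (hstart : A'.start = ⟨0, hn⟩)
    (hstep : ∀ p a q, d p a q = true ↔ A'.step p a = q)
    (haccept : A'.accept = {q | f q = true}) :
    ∀ (w : List α) (q q' : Fin n),
      A.eval w = q → A'.eval w = q' → y q q' = true := by
  intro w
  induction w using List.reverseRecOn with
  | nil =>
    intro q q' hq hq'
    simp [DFA.eval, DFA.evalFrom, hAstart, hstart] at hq hq'
    subst hq; subst hq'; exact hyinit
  | append_singleton w a ih =>
    intro q q' hq hq'
    have h1 : A.eval (w ++ [a]) = A.step (A.eval w) a := by
      simp [DFA.eval, DFA.evalFrom]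
    have h2 : A'.eval (w ++ [a]) = A'.step (A'.eval w) a := by
      simp [DFA.eval, DFA.evalFrom]
    have hy := ih (A.eval w) (A'.eval w) rfl rfl
    have hd : d (A'.eval w) a (A'.step (A'.eval w) a) = true :=
      (hstep _ _ _).mpr rfl
    have := hytrans (A.eval w) (A'.eval w) (A'.step (A'.eval w) a) a hy hd
    rw [hq] at h1; rw [hq'] at h2
    rw [h1, h2]
    exact this
end

section
/- Let A = ([n], Σ, δ, 1, F) be a DFA with state set [n] and initial state 1, and let v be an assignment of the encoding variables that satisfies Φ_DFA and Φ_{⊉A}, with A' the DFA decoded from v. Then for all 0 ≤ i ≤ n² and q, q' ∈ [n], if v(z_{i,q,q'}) = 1 then there exists a word w ∈ Σ* of length exactly i such that the run of A on w ends in state q and the run of A' on w ends in state q'. -/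
/-- **Claim 3.** Let `A = ([n], Σ, δ, 1, F)` be a DFA (state set
`[n]` is modeled by `Fin n`, initial state `1` by `⟨0, _⟩`), and let `v` (given
by the Boolean functions `d`, `f`, `z`) satisfy `Φ_DFA` and `Φ_{⊉A}`, with `A'`
the DFA decoded from `v`. Then for all `0 ≤ i ≤ n²` and states `q`, `q'`, if
`v(z_{i,q,q'}) = 1` then there exists a word `w ∈ Σ*` of length exactly `i`
such that the run of `A` on `w` ends in `q` and the run of `A'` on `w` ends in
`q'`. -/
theorem claim_proper_inclusion
    {α : Type} [Fintype α] [Nonempty α]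
    (n : ℕ) (hn : 1 ≤ n)
    (A : DFA α (Fin n)) (hAstart : A.start = ⟨0, hn⟩)
    (d : Fin n → α → Fin n → Bool) (f : Fin n → Bool)
    (z : ℕ → Fin n → Fin n → Bool)
    -- `v` satisfies `Φ_DFA`:
    (hPhiDFA : ∀ p a, ∃! q, d p a q = true)
    -- `v` satisfies `Φ_{⊉A}`:
    (hzinit : z 0 ⟨0, hn⟩ ⟨0, hn⟩ = true)
    (hzunique : ∀ i ≤ n ^ 2, ∃! qq : Fin n × Fin n, z i qq.1 qq.2 = true)
    (hztrans : ∀ i < n ^ 2, ∀ p p' q q',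
      z i p p' = true → z (i + 1) q q' = true →
        ∃ a : α, A.step p a = q ∧ d p' a q' = true)
    (hzfinal : ∃ i ≤ n ^ 2, ∃ q ∈ A.accept, ∃ q',
      z i q q' = true ∧ f q' = false)
    -- `A'` is the DFA decoded from `v`:
    (A' : DFA α (Fin n))
    (hstart : A'.start = ⟨0, hn⟩)
    (hstep : ∀ p a q, d p a q = true ↔ A'.step p a = q)
    (haccept : A'.accept = {q | f q = true}) :
    ∀ i ≤ n ^ 2, ∀ q q' : Fin n, z i q q' = true →
      ∃ w : List α, w.length = i ∧ A.eval w = q ∧ A'.eval w = q' := by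
  intro i
  induction i with
  | zero =>
    intro _ q q' hz
    obtain ⟨qq, _, huniq⟩ := hzunique 0 (Nat.zero_le _)
    have h1 : (q, q') = qq := huniq (q, q') hz
    have h2 : ((⟨0, hn⟩ : Fin n), (⟨0, hn⟩ : Fin n)) = qq := huniq _ hzinit
    rw [← h2] at h1
    obtain ⟨hq, hq'⟩ := Prod.mk.injEq .. ▸ h1
    subst hq; subst hq'
    exact ⟨[], rfl, by simp [DFA.eval, DFA.evalFrom, hAstart], by simp [DFA.eval, DFA.evalFrom, hstart]⟩
  | succ i ih =>
    intro hle q q' hz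
    have hi : i < n ^ 2 := hle
    obtain ⟨⟨p, p'⟩, hpz, _⟩ := hzunique i (Nat.le_of_lt hi)
    obtain ⟨w, hw, hA, hA'⟩ := ih (Nat.le_of_lt hi) p p' hpz
    obtain ⟨a, hstepA, hd⟩ := hztrans i hi p p' q q' hpz hz
    refine ⟨w ++ [a], by simp [hw], ?_, ?_⟩
    · rw [DFA.eval, DFA.evalFrom_append_singleton, ← DFA.eval, hA, hstepA]
    · rw [DFA.eval, DFA.evalFrom_append_singleton, ← DFA.eval, hA',
        (hstep p' a q').mp hd]
end

section
/- Let Σ be a finite nonempty alphabet, P ⊆ Σ* a finite set of words, n ≥ 1, and A = ([n], Σ, δ, 1, F) a DFA with state set [n] and initial state 1. Then the propositional formula Φ^A = Φ_DFA ∧ Φ_P ∧ Φ_{⊆A} ∧ Φ_{⊉A} is satisfiable if and only if there exists a DFA A' over Σ with at most n states such that P ⊆ L(A') and L(A') ⊊ L(A). -/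
private lemma dfa_exists_short {α σ : Type} [Fintype σ] (D : DFA α σ) :
    ∀ (k : ℕ) (w : List α), w.length ≤ k → w ∈ D.accepts →
      ∃ v ∈ D.accepts, v.length < Fintype.card σ := by
  intro k
  induction k with
  | zero =>
    intro w hw hacc
    have hpos : 0 < Fintype.card σ := Fintype.card_pos_iff.mpr ⟨D.start⟩
    exact ⟨w, hacc, by omega⟩
  | succ k ih =>
    intro w hw hacc
    by_cases hlt : w.length < Fintype.card σ
    · exact ⟨w, hacc, hlt⟩
    · obtain ⟨a, b, c, hx, _, hb, hsub⟩ := D.pumping_lemma hacc (not_lt.1 hlt)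
      have hac : a ++ c ∈ D.accepts := by
        have h1 : a ∈ ({a} : Language α) := rfl
        have h2 := Language.nil_mem_kstar ({b} : Language α)
        have h3 := Language.append_mem_mul
          (Language.append_mem_mul h1 h2) (show c ∈ ({c} : Language α) from rfl)
        have h4 := hsub h3
        simp at h4
        exact h4
      have hlenw := congrArg List.length hx
      have hbpos : 0 < b.length := List.length_pos_iff.mpr hb
      simp only [List.length_append] at hlenw
      refine ih (a ++ c) ?_ hac
      simp only [List.length_append]
      omega

/-- **Theorem 2.** Let `Σ` be a finite nonempty alphabet,
`P ⊆ Σ*` a finite set of words, `n ≥ 1`, and `A = ([n], Σ, δ, 1, F)` a DFA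
(state set `[n]` is modeled by `Fin n`, initial state `1` by `⟨0, _⟩`). Then
the propositional formula `Φ^A = Φ_DFA ∧ Φ_P ∧ Φ_{⊆A} ∧ Φ_{⊉A}` is satisfiable
(i.e. there is an assignment, given by Boolean functions `d`, `f`, `x`, `y`,
`z`, satisfying all four conjuncts) if and only if there exists a DFA `A'` over
`Σ` with at most `n` states such that `P ⊆ L(A')` and `L(A') ⊊ L(A)`. -/
theorem phiA_satisfiable_iff
    {α : Type} [Fintype α] [Nonempty α]
    (n : ℕ) (hn : 1 ≤ n) (P : Set (List α)) (hP : P.Finite)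
    (A : DFA α (Fin n)) (hAstart : A.start = ⟨0, hn⟩) :
    (∃ (d : Fin n → α → Fin n → Bool) (f : Fin n → Bool)
        (x : List α → Fin n → Bool) (y : Fin n → Fin n → Bool)
        (z : ℕ → Fin n → Fin n → Bool),
      -- `Φ_DFA`:
      (∀ p a, ∃! q, d p a q = true) ∧
      -- `Φ_P`:
      (x [] ⟨0, hn⟩ = true ∧ ∀ q, q ≠ ⟨0, hn⟩ → x [] q = false) ∧
      (∀ (u : List α) (a : α), (∃ w ∈ P, (u ++ [a]) <+: w) →
        ∀ p q, x u p = true → d p a q = true → x (u ++ [a]) q = true) ∧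
      (∀ w ∈ P, ∀ q, x w q = true → f q = true) ∧
      -- `Φ_{⊆A}`:
      (y ⟨0, hn⟩ ⟨0, hn⟩ = true) ∧
      (∀ (p p' q' : Fin n) (a : α),
        y p p' = true → d p' a q' = true → y (A.step p a) q' = true) ∧
      (∀ p, p ∉ A.accept → ∀ p', y p p' = true → f p' = false) ∧
      -- `Φ_{⊉A}`:
      (z 0 ⟨0, hn⟩ ⟨0, hn⟩ = true) ∧
      (∀ i ≤ n ^ 2, ∃! qq : Fin n × Fin n, z i qq.1 qq.2 = true) ∧
      (∀ i < n ^ 2, ∀ p p' q q',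
        z i p p' = true → z (i + 1) q q' = true →
          ∃ a : α, A.step p a = q ∧ d p' a q' = true) ∧
      (∃ i ≤ n ^ 2, ∃ q ∈ A.accept, ∃ q',
        z i q q' = true ∧ f q' = false))
    ↔
    (∃ (σ : Type) (_ : Fintype σ) (A' : DFA α σ),
      Fintype.card σ ≤ n ∧ P ⊆ A'.accepts ∧ A'.accepts < A.accepts) := by
  constructor
  · -- Forward: satisfying assignment gives a DFA
    rintro ⟨d, f, x, y, z, hd, ⟨hx0, -⟩, hxstep, hxfin, hy0, hystep, hyfin,
      hz0, hzuniq, hzstep, i, hi, q, hqacc, q', hzq, hfq'⟩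
    set δ' : Fin n → α → Fin n := fun p a => (hd p a).exists.choose with hδ'def
    have hδ' : ∀ p a, d p a (δ' p a) = true := fun p a => (hd p a).exists.choose_spec
    have huniq : ∀ p a q, d p a q = true → q = δ' p a := fun p a q h =>
      (hd p a).unique h (hδ' p a)
    set A' : DFA α (Fin n) := ⟨δ', ⟨0, hn⟩, {q | f q = true}⟩ with hA'def
    refine ⟨Fin n, inferInstance, A', by simp, ?_, ?_⟩
    · -- P ⊆ L(A')
      have key : ∀ u : List α, (∃ w ∈ P, u <+: w) → x u (A'.eval u) = true := by
        intro u
        induction u using List.reverseRecOn with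
        | nil => intro _; simpa using hx0
        | append_singleton u a ihu =>
          intro hpre
          have h1 : ∃ w ∈ P, u <+: w := by
            obtain ⟨w, hw, hp⟩ := hpre
            exact ⟨w, hw, (List.prefix_append u [a]).trans hp⟩
          have hx := ihu h1
          have := hxstep u a hpre _ _ hx (hδ' (A'.eval u) a)
          simpa using this
      intro w hw
      have hxw := key w ⟨w, hw, List.prefix_refl w⟩
      exact hxfin w hw _ hxw
    · -- L(A') ⊊ L(A)
      have ysub : ∀ w : List α, y (A.eval w) (A'.eval w) = true := by
        intro w
        induction w using List.reverseRecOn with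
        | nil => simpa [DFA.eval_nil, hAstart] using hy0
        | append_singleton u a ihu =>
          have := hystep (A.eval u) (A'.eval u) (δ' (A'.eval u) a) a ihu
            (hδ' (A'.eval u) a)
          simpa using this
      have hsub : A'.accepts ≤ A.accepts := by
        intro w hw
        replace hw : w ∈ A'.accepts := hw
        by_contra hna
        replace hna : w ∉ A.accepts := hna
        have hf := hyfin (A.eval w) (by rwa [DFA.mem_accepts] at hna) _ (ysub w)
        rw [DFA.mem_accepts] at hw
        simp only [hA'def, Set.mem_setOf_eq] at hw
        rw [hw] at hf
        exact Bool.true_eq_false.mp hf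
      have zreach : ∀ i ≤ n ^ 2, ∀ q q', z i q q' = true →
          ∃ w : List α, A.eval w = q ∧ A'.eval w = q' := by
        intro i
        induction i with
        | zero =>
          intro _ q q' hz
          have heq : ((q, q') : Fin n × Fin n) = (⟨0, hn⟩, ⟨0, hn⟩) :=
            ((hzuniq 0 (Nat.zero_le _)).unique hz hz0)
          have h1 : q = ⟨0, hn⟩ := congrArg Prod.fst heq
          have h2 : q' = ⟨0, hn⟩ := congrArg Prod.snd heq
          exact ⟨[], by simp [hAstart, h1], by simp [h2, hA'def]⟩
        | succ i ihz =>
          intro hsucc q q' hz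
          have hi' : i ≤ n ^ 2 := by omega
          obtain ⟨⟨p, p'⟩, hzp, -⟩ := hzuniq i hi'
          obtain ⟨a, hstepA, hda⟩ := hzstep i (by omega) p p' q q' hzp hz
          obtain ⟨w, hwA, hwA'⟩ := ihz hi' p p' hzp
          refine ⟨w ++ [a], by simp [hwA, hstepA], ?_⟩
          have hq' : q' = δ' p' a := huniq _ _ _ hda
          simp [hq', hwA']
          rfl
      obtain ⟨w, hwA, hwA'⟩ := zreach i hi q q' hzq
      have hwin : w ∈ A.accepts := by rw [DFA.mem_accepts, hwA]; exact hqacc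
      have hwout : w ∉ A'.accepts := by
        rw [DFA.mem_accepts, hwA']
        simp only [hA'def, Set.mem_setOf_eq, hfq']
        exact fun h => Bool.false_ne_true h
      refine lt_of_le_of_ne hsub fun h => ?_
      rw [h] at hwout
      exact hwout hwin
  · -- Backward: DFA gives satisfying assignment
    rintro ⟨σ, instF, A', hcard, hPsub, hlt⟩
    classical
    have hsub : A'.accepts ≤ A.accepts := le_of_lt hlt
    obtain ⟨e0⟩ : Nonempty (σ ↪ Fin n) :=
      Function.Embedding.nonempty_of_card_le (by simpa using hcard)
    set e : σ → Fin n := fun s => Equiv.swap (e0 A'.start) (⟨0, hn⟩ : Fin n) (e0 s)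
      with hedef
    have he_inj : Function.Injective e :=
      (Equiv.swap _ _).injective.comp e0.injective
    have he_start : e A'.start = ⟨0, hn⟩ := by
      simp [hedef, Equiv.swap_apply_left]
    set r : Fin n → σ := fun q => if h : ∃ s, e s = q then h.choose else A'.start
      with hrdef
    have hre : ∀ s, r (e s) = s := by
      intro s
      have h : ∃ t, e t = e s := ⟨s, rfl⟩
      simp only [hrdef, dif_pos h]
      exact he_inj h.choose_spec
    set B : DFA α (Fin n) :=
      ⟨fun p a => e (A'.step (r p) a), ⟨0, hn⟩, e '' A'.accept⟩ with hBdef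
    have heval : ∀ (w : List α) (s : σ), B.evalFrom (e s) w = e (A'.evalFrom s w) := by
      intro w
      induction w with
      | nil => intro s; simp
      | cons a w ihw =>
        intro s
        have hstep : B.step (e s) a = e (A'.step s a) := by
          show e (A'.step (r (e s)) a) = _
          rw [hre]
        show B.evalFrom (B.step (e s) a) w = _
        rw [hstep, ihw]
        rfl
    have hBeval : ∀ w : List α, B.eval w = e (A'.eval w) := by
      intro w
      show B.evalFrom (⟨0, hn⟩ : Fin n) w = _
      rw [← he_start, heval]
      rfl
    have hBacc : B.accepts = A'.accepts := by
      ext w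
      rw [DFA.mem_accepts, DFA.mem_accepts, hBeval]
      exact he_inj.mem_set_image
    -- a short word in L(A) \ L(B)
    set D : DFA α (Fin n × Fin n) :=
      ⟨fun pq a => (A.step pq.1 a, B.step pq.2 a), (A.start, B.start),
        {pq | pq.1 ∈ A.accept ∧ pq.2 ∉ B.accept}⟩ with hDdef
    have hDeval : ∀ w : List α, D.eval w = (A.eval w, B.eval w) := by
      intro w
      induction w using List.reverseRecOn with
      | nil => rfl
      | append_singleton u a ihu => simp [ihu]; rfl
    obtain ⟨w1, hw1A, hw1B⟩ : ∃ w, w ∈ A.accepts ∧ w ∉ A'.accepts := by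
      by_contra h
      push_neg at h
      exact (ne_of_lt hlt) (le_antisymm hsub h)
    have hw1D : w1 ∈ D.accepts := by
      rw [DFA.mem_accepts, hDeval]
      refine ⟨hw1A, ?_⟩
      intro hc
      exact hw1B (hBacc ▸ (DFA.mem_accepts B).mpr hc)
    obtain ⟨w0, hw0D, hw0len⟩ := dfa_exists_short D w1.length w1 le_rfl hw1D
    have hw0len' : w0.length < n ^ 2 := by
      simpa [Fintype.card_prod, pow_two] using hw0len
    rw [DFA.mem_accepts, hDeval] at hw0D
    obtain ⟨hA0, hB0⟩ := hw0D
    set a0 : α := Classical.arbitrary α with ha0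
    set W : List α := w0 ++ List.replicate (n ^ 2) a0 with hWdef
    have hWlen : n ^ 2 ≤ W.length := by simp [hWdef]
    have hWtake : W.take w0.length = w0 := by rw [hWdef]; exact List.take_left
    refine ⟨fun p a q => decide (q = B.step p a), fun q => decide (q ∈ B.accept),
      fun u q => decide ((u = [] ∨ ∃ w ∈ P, u <+: w) ∧ B.eval u = q),
      fun p p' => decide (∃ w : List α, A.eval w = p ∧ B.eval w = p'),
      fun i q q' => decide (A.eval (W.take i) = q ∧ B.eval (W.take i) = q'),
      ?_, ⟨?_, ?_⟩, ?_, ?_, ?_, ?_, ?_, ?_, ?_, ?_, ?_⟩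
    · intro p a
      exact ⟨B.step p a, by simp, fun q h => by simpa using h⟩
    · simp [hBdef]
    · intro q hq
      simp only [decide_eq_false_iff_not]
      rintro ⟨-, h⟩
      exact hq (h ▸ rfl)
    · intro u a hex p q hxu hdq
      simp only [decide_eq_true_eq] at hxu hdq ⊢
      obtain ⟨-, hevalu⟩ := hxu
      refine ⟨Or.inr hex, ?_⟩
      rw [DFA.eval_append_singleton, hevalu]
      exact hdq.symm
    · intro w hw q hxw
      simp only [decide_eq_true_eq] at hxw ⊢
      obtain ⟨-, hevalw⟩ := hxw
      have : w ∈ B.accepts := hBacc ▸ hPsub hw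
      rw [DFA.mem_accepts, hevalw] at this
      exact this
    · simp only [decide_eq_true_eq]
      exact ⟨[], by simp [hAstart], rfl⟩
    · intro p p' q' a hy hdq
      simp only [decide_eq_true_eq] at hy hdq ⊢
      obtain ⟨w, h1, h2⟩ := hy
      refine ⟨w ++ [a], by simp [h1], ?_⟩
      rw [DFA.eval_append_singleton, h2]
      exact hdq.symm
    · intro p hp p' hy
      simp only [decide_eq_true_eq] at hy
      simp only [decide_eq_false_iff_not]
      obtain ⟨w, h1, h2⟩ := hy
      intro hc
      have : w ∈ B.accepts := by rw [DFA.mem_accepts, h2]; exact hc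
      have : w ∈ A.accepts := hsub (hBacc ▸ this)
      rw [DFA.mem_accepts, h1] at this
      exact hp this
    · simp only [decide_eq_true_eq, List.take_zero]
      simp [hAstart, hBdef]
    · intro i _
      refine ⟨(A.eval (W.take i), B.eval (W.take i)), by simp, ?_⟩
      rintro ⟨q, q'⟩ h
      simp only [decide_eq_true_eq] at h
      simp [h.1, h.2]
    · intro i hi p p' q q' hz1 hz2
      simp only [decide_eq_true_eq] at hz1 hz2
      have hiW : i < W.length := lt_of_lt_of_le hi hWlen
      refine ⟨W.get ⟨i, hiW⟩, ?_, ?_⟩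
      · have htake : W.take (i + 1) = W.take i ++ [W.get ⟨i, hiW⟩] := by
          rw [List.take_succ, List.getElem?_eq_getElem hiW]
          rfl
        rw [← hz2.1, htake, DFA.eval_append_singleton, hz1.1]
      · simp only [decide_eq_true_eq]
        have htake : W.take (i + 1) = W.take i ++ [W.get ⟨i, hiW⟩] := by
          rw [List.take_succ, List.getElem?_eq_getElem hiW]
          rfl
        rw [← hz2.2, htake, DFA.eval_append_singleton, hz1.2]
    · refine ⟨w0.length, le_of_lt hw0len', A.eval w0, hA0, B.eval w0, ?_, ?_⟩
      · simp [hWtake]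
      · simpa only [decide_eq_false_iff_not] using hB0
end
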